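/- Let k ≥ 2 be an integer and let a ∈ (0, 1/k) and c ∈ (0,1) be fixed real numbers. Then for every ε > 0 there exists n₀ = n₀(k, ε) such that for all n ≥ n₀: if f₀^{an}(k,n) ≤ c·C(n,k), then f₀^{an+1}(k,n) ≤ (c + ε)·C(n,k). -/

import Mathlib

/-- A fractional matching of a `k`-graph `H` on `Fin m`: weights in `[0,1]`, supported on the
edges, with total weight at each vertex at most `1`. -/
def IsFracMatching {m : ℕ} (H : Finset (Finset (Fin m))) (w : Finset (Fin m) → ℝ) : Prop :=
  (∀ e, 0 ≤ w e ∧ w e ≤ 1) ∧ (∀ e ∉ H, w e = 0) ∧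
    ∀ v : Fin m, ∑ e ∈ H.filter (fun e => v ∈ e), w e ≤ 1

/-- `f₀^s(k,n)`: the smallest integer `M` such that every `n`-vertex `k`-graph with at least `M`
edges has a fractional matching of size at least `s`. -/
noncomputable def f0 (k n : ℕ) (s : ℝ) : ℕ :=
  sInf { M : ℕ | ∀ H : Finset (Finset (Fin n)), H ⊆ Finset.univ.powersetCard k →
    M ≤ H.card → ∃ w : Finset (Fin n) → ℝ, IsFracMatching H w ∧ s ≤ ∑ e ∈ H, w e }

open Finset


lemma card_filter_mem_le (n k : ℕ) (v : Fin n) :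
    (((univ : Finset (Fin n)).powersetCard k).filter (fun f => v ∈ f)).card
      ≤ (n-1).choose (k-1) := by
  classical
  have h : (((univ : Finset (Fin n)).powersetCard k).filter (fun f => v ∈ f)).card
      ≤ (((univ : Finset (Fin n)).erase v).powersetCard (k-1)).card := by
    apply Finset.card_le_card_of_injOn (fun f => f.erase v)
    · intro f hf
      simp only [mem_coe, mem_filter, mem_powersetCard] at hf
      rw [mem_coe, mem_powersetCard]
      refine ⟨fun x hx => ?_, ?_⟩
      · rcases Finset.mem_erase.1 hx with ⟨hx1, hx2⟩
        exact Finset.mem_erase.2 ⟨hx1, Finset.mem_univ x⟩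
      · rw [Finset.card_erase_of_mem hf.2, hf.1.2]
    · intro f hf g hg hfg
      simp only [coe_filter, Set.mem_setOf_eq] at hf hg
      have := congrArg (insert v) hfg
      rwa [Finset.insert_erase hf.2, Finset.insert_erase hg.2] at this
  rwa [Finset.card_powersetCard, Finset.card_erase_of_mem (Finset.mem_univ v),
    Finset.card_univ, Fintype.card_fin] at h

lemma card_meeting_le (n k : ℕ) (e : Finset (Fin n)) :
    (((univ : Finset (Fin n)).powersetCard k).filter (fun f => ¬ Disjoint f e)).card
      ≤ e.card * (n-1).choose (k-1) := by
  classical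
  have hsub : ((univ : Finset (Fin n)).powersetCard k).filter (fun f => ¬ Disjoint f e)
      ⊆ e.biUnion (fun v => ((univ : Finset (Fin n)).powersetCard k).filter (fun f => v ∈ f)) := by
    intro f hf
    simp only [mem_filter] at hf
    rw [Finset.not_disjoint_iff] at hf
    obtain ⟨v, hvf, hve⟩ := hf.2
    exact Finset.mem_biUnion.2 ⟨v, hve, Finset.mem_filter.2 ⟨hf.1, hvf⟩⟩
  calc _ ≤ _ := Finset.card_le_card hsub
    _ ≤ ∑ v ∈ e, (((univ : Finset (Fin n)).powersetCard k).filter (fun f => v ∈ f)).card :=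
        Finset.card_biUnion_le
    _ ≤ ∑ _v ∈ e, (n-1).choose (k-1) := Finset.sum_le_sum (fun v _ => card_filter_mem_le n k v)
    _ = e.card * (n-1).choose (k-1) := by rw [Finset.sum_const, smul_eq_mul]

lemma le_choose_of_half (n k : ℕ) (hk1 : 1 ≤ k) (hk : k ≤ n / 2) : n ≤ n.choose k := by
  induction k, hk1 using Nat.le_induction with
  | base => simp
  | succ k hk1 ih =>
      have hk' : k ≤ n / 2 := le_trans (Nat.le_succ k) hk
      have := Nat.choose_le_succ_of_lt_half_left (r := k) (n := n) (by omega)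
      exact le_trans (ih hk') this


/-- Proposition 3.2 (Kühn–Osthus–Townsend): for fixed `k ≥ 2`, `a ∈ (0,1/k)` and `c ∈ (0,1)`,
for every `ε > 0` there is `n₀` such that for all `n ≥ n₀`: if `f₀^{an}(k,n) ≤ c·C(n,k)` then
`f₀^{an+1}(k,n) ≤ (c + ε)·C(n,k)`. -/
theorem stmt_10 (k : ℕ) (hk : 2 ≤ k) (a c : ℝ) (ha0 : 0 < a) (ha1 : a < 1 / (k : ℝ))
    (hc0 : 0 < c) (hc1 : c < 1) (ε : ℝ) (hε : 0 < ε) :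
    ∃ n₀ : ℕ, ∀ n : ℕ, n₀ ≤ n →
      (f0 k n (a * n) : ℝ) ≤ c * (n.choose k : ℝ) →
      (f0 k n (a * n + 1) : ℝ) ≤ (c + ε) * (n.choose k : ℝ) := by
  classical
  refine ⟨2 * k + ⌈(2 * ((k:ℝ)^2 + 1)) / ε⌉₊, fun n hn h1 => ?_⟩
  have hkn : 2 * k ≤ n := le_trans (Nat.le_add_right _ _) hn
  have hn1 : 1 ≤ n := by omega
  have hkhalf : k ≤ n / 2 := by omega
  set C : ℝ := (n.choose k : ℝ) with hC_def
  have hC0 : 0 < C := by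
    rw [hC_def]; exact_mod_cast Nat.choose_pos (by omega : k ≤ n)
  have hCn : (n : ℝ) ≤ C := by
    rw [hC_def]; exact_mod_cast le_choose_of_half n k (by omega) hkhalf
  have hn0 : (0 : ℝ) < n := by exact_mod_cast hn1
  have hεn : 2 * ((k:ℝ)^2 + 1) ≤ ε * n := by
    have h2 : (2 * ((k:ℝ)^2 + 1)) / ε ≤ (⌈(2 * ((k:ℝ)^2 + 1)) / ε⌉₊ : ℝ) := Nat.le_ceil _
    have h3 : (⌈(2 * ((k:ℝ)^2 + 1)) / ε⌉₊ : ℝ) ≤ n := by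
      have : ⌈(2 * ((k:ℝ)^2 + 1)) / ε⌉₊ ≤ n := by omega
      exact_mod_cast this
    rw [div_le_iff₀ hε] at h2
    calc 2 * ((k:ℝ)^2 + 1) ≤ (⌈(2 * ((k:ℝ)^2 + 1)) / ε⌉₊ : ℝ) * ε := h2
      _ ≤ n * ε := by nlinarith
      _ = ε * n := mul_comm _ _
  -- key numeric bound : k * choose(n-1,k-1) + 1 ≤ ε * C
  set chR : ℝ := ((n-1).choose (k-1) : ℝ) with hchR_def
  have hidR : (n : ℝ) * chR = C * k := by
    have := Nat.add_one_mul_choose_eq (n-1) (k-1)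
    have hn' : n - 1 + 1 = n := by omega
    have hk' : k - 1 + 1 = k := by omega
    rw [hn', hk'] at this
    rw [hC_def, hchR_def]; exact_mod_cast this
  have hchR0 : 0 ≤ chR := by positivity
  have hkey : (k : ℝ) * chR + 1 ≤ ε * C := by
    have h1' : (n : ℝ) * ((k : ℝ) * chR + 1) = (k:ℝ) * (C * k) + n := by
      calc (n : ℝ) * ((k : ℝ) * chR + 1) = (k:ℝ) * ((n:ℝ) * chR) + n := by ring
        _ = (k:ℝ) * (C * k) + n := by rw [hidR]
    have h2' : (k:ℝ) * (C * k) + n ≤ (n : ℝ) * (ε * C) := by nlinarith [mul_le_mul_of_nonneg_right hεn hC0.le]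
    have := h1' ▸ h2'
    exact le_of_mul_le_mul_left this hn0
  -- the floor M
  set M : ℕ := ⌊(c + ε) * C⌋₊ with hM_def
  have hcεC0 : 0 ≤ (c + ε) * C := by positivity
  have hMle : (M : ℝ) ≤ (c + ε) * C := Nat.floor_le hcεC0
  have hltM : (c + ε) * C < M + 1 := Nat.lt_floor_add_one _
  have hM1 : 1 ≤ M := by
    apply Nat.le_floor
    push_cast
    nlinarith
  -- the set for s = a*n is nonempty, so f0 is a member
  have hvac : ∀ s : ℝ, (n.choose k + 1) ∈ { M : ℕ | ∀ H : Finset (Finset (Fin n)),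
      H ⊆ Finset.univ.powersetCard k → M ≤ H.card →
      ∃ w : Finset (Fin n) → ℝ, IsFracMatching H w ∧ s ≤ ∑ e ∈ H, w e } := by
    intro s H hH hle
    exfalso
    have h1 : H.card ≤ ((univ : Finset (Fin n)).powersetCard k).card := Finset.card_le_card hH
    rw [Finset.card_powersetCard, Finset.card_univ, Fintype.card_fin] at h1
    omega
  have hf0mem : ∀ H : Finset (Finset (Fin n)), H ⊆ Finset.univ.powersetCard k →
      f0 k n (a * n) ≤ H.card →
      ∃ w : Finset (Fin n) → ℝ, IsFracMatching H w ∧ a * n ≤ ∑ e ∈ H, w e :=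
    Nat.sInf_mem ⟨_, hvac (a * n)⟩
  -- show M is in the set for s = a*n + 1
  have hMmem : M ∈ { M : ℕ | ∀ H : Finset (Finset (Fin n)), H ⊆ Finset.univ.powersetCard k →
      M ≤ H.card → ∃ w : Finset (Fin n) → ℝ, IsFracMatching H w ∧
      a * n + 1 ≤ ∑ e ∈ H, w e } := by
    intro H hH hMH
    have hHne : H.Nonempty := Finset.card_pos.1 (by omega)
    obtain ⟨e, heH⟩ := hHne
    have he_pc : e ∈ (univ : Finset (Fin n)).powersetCard k := hH heH
    have hecard : e.card = k := (Finset.mem_powersetCard.1 he_pc).2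
    set H'' : Finset (Finset (Fin n)) := H.filter (fun f => Disjoint f e) with hH''_def
    -- cardinality of H''
    have hsplit : (H.filter (fun f => Disjoint f e)).card
        + (H.filter (fun f => ¬ Disjoint f e)).card = H.card :=
      Finset.card_filter_add_card_filter_not _
    have hnegle : (H.filter (fun f => ¬ Disjoint f e)).card ≤ k * (n-1).choose (k-1) := by
      calc (H.filter (fun f => ¬ Disjoint f e)).card
          ≤ (((univ : Finset (Fin n)).powersetCard k).filter (fun f => ¬ Disjoint f e)).card :=
            Finset.card_le_card (Finset.filter_subset_filter _ hH)
        _ ≤ e.card * (n-1).choose (k-1) := card_meeting_le n k e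
        _ = k * (n-1).choose (k-1) := by rw [hecard]
    have hHcR : (c + ε) * C - 1 < (H.card : ℝ) := by
      have : (M : ℝ) ≤ (H.card : ℝ) := by exact_mod_cast hMH
      linarith
    have hH''R : c * C ≤ (H''.card : ℝ) := by
      have hA : (H''.card : ℝ) = (H.card : ℝ) - ((H.filter (fun f => ¬ Disjoint f e)).card : ℝ) := by
        rw [← hsplit]; push_cast; ring
      have hB : ((H.filter (fun f => ¬ Disjoint f e)).card : ℝ) ≤ (k : ℝ) * chR := by
        rw [hchR_def]; exact_mod_cast hnegle
      linarith
    have hf0le : f0 k n (a * n) ≤ H''.card := by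
      have : (f0 k n (a * n) : ℝ) ≤ (H''.card : ℝ) := by nlinarith
      exact_mod_cast this
    obtain ⟨w, hw, hwsum⟩ := hf0mem H'' (le_trans (Finset.filter_subset _ _) hH) hf0le
    -- e is not in H''
    have heH'' : e ∉ H'' := by
      intro h
      have h2 := disjoint_self.1 (Finset.mem_filter.1 h).2
      rw [Finset.bot_eq_empty] at h2
      rw [h2] at hecard
      simp at hecard
      omega
    have hwe0 : w e = 0 := hw.2.1 e heH''
    refine ⟨fun f => w f + if f = e then 1 else 0, ⟨?_, ?_, ?_⟩, ?_⟩
    · intro f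
      by_cases hf : f = e
      · subst hf; simp [hwe0]
      · simp only [hf, if_false, add_zero]; exact hw.1 f
    · intro f hf
      have hf'' : f ∉ H'' := fun h' => hf (Finset.mem_filter.1 h').1
      have hfe : f ≠ e := by rintro rfl; exact hf heH
      simp [hfe, hw.2.1 f hf'']
    · intro v
      rw [Finset.sum_add_distrib, Finset.sum_ite_eq' (H.filter (fun f => v ∈ f)) e (fun _ => (1:ℝ))]
      have hsum_eq : ∑ f ∈ H.filter (fun f => v ∈ f), w f
          = ∑ f ∈ H''.filter (fun f => v ∈ f), w f := by
        refine (Finset.sum_subset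
          (Finset.filter_subset_filter _ (Finset.filter_subset _ H)) ?_).symm
        intro f hf hfn
        apply hw.2.1
        intro hf''
        exact hfn (Finset.mem_filter.2 ⟨hf'', (Finset.mem_filter.1 hf).2⟩)
      rw [hsum_eq]
      by_cases hv : v ∈ e
      · have hemptyf : H''.filter (fun f => v ∈ f) = ∅ := by
          apply Finset.filter_false_of_mem
          intro f hf
          have hdisj := (Finset.mem_filter.1 hf).2
          exact fun hvf => (Finset.disjoint_left.1 hdisj hvf) hv
        rw [hemptyf, Finset.sum_empty]
        simp [Finset.mem_filter, heH, hv]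
      · have : e ∉ H.filter (fun f => v ∈ f) := by
          simp [Finset.mem_filter, hv]
        rw [if_neg this, add_zero]
        exact hw.2.2 v
    · rw [Finset.sum_add_distrib, Finset.sum_ite_eq' H e (fun _ => (1:ℝ)), if_pos heH]
      have hsum_eq : ∑ f ∈ H, w f = ∑ f ∈ H'', w f := by
        refine (Finset.sum_subset (Finset.filter_subset _ H) ?_).symm
        intro f hf hfn
        exact hw.2.1 f hfn
      rw [hsum_eq]
      linarith
  -- conclude
  have hf0M : f0 k n (a * n + 1) ≤ M := Nat.sInf_le hMmem
  calc (f0 k n (a * n + 1) : ℝ) ≤ (M : ℝ) := by exact_mod_cast hf0M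
    _ ≤ (c + ε) * C := hMle
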